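/- Let K, K₀ ∈ 𝒦^{n*} and let r = d_H(K,K₀) be their Hausdorff distance. Then δ^c(K) ≤ (1+r)^{2n}·δ^c(K₀). -/

import Mathlib

open Metric Set Pointwise MeasureTheory Filter ENNReal Topology

variable {n : ℕ}

local notation "E" => EuclideanSpace ℝ (Fin n)

lemma isomMP (g : E ≃ᵢ E) : MeasurePreserving g volume volume := by
  have h : ⇑g = (fun y => y + g 0) ∘ ⇑(g.toRealAffineIsometryEquiv.linearIsometryEquiv) := by
    funext x
    have h2 := g.toRealAffineIsometryEquiv.map_vadd 0 x
    simp only [IsometryEquiv.coeFn_toRealAffineIsometryEquiv, vadd_eq_add, add_zero] at h2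
    simpa [add_comm] using h2
  rw [h]
  exact (measurePreserving_add_right volume (g 0)).comp
    g.toRealAffineIsometryEquiv.linearIsometryEquiv.measurePreserving

lemma vol_image_isom (g : E ≃ᵢ E) {K : Set E} (hK : NullMeasurableSet K volume) :
    volume (⇑g '' K) = volume K := by
  rw [← IsometryEquiv.preimage_symm]
  exact (isomMP g.symm).measure_preimage hK

noncomputable def conjIso (c : ℝ) (hc : c ≠ 0) (g : E ≃ᵢ E) : E ≃ᵢ E :=
  { toEquiv :=
    { toFun := fun x => c • g (c⁻¹ • x)
      invFun := fun x => c • g.symm (c⁻¹ • x)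
      left_inv := fun x => by simp [inv_smul_smul₀ hc, smul_inv_smul₀ hc]
      right_inv := fun x => by simp [inv_smul_smul₀ hc, smul_inv_smul₀ hc] }
    isometry_toFun := Isometry.of_dist_eq fun x y => by
      show dist (c • g (c⁻¹ • x)) (c • g (c⁻¹ • y)) = dist x y
      rw [dist_smul₀, (g.isometry).dist_eq, dist_smul₀, ← mul_assoc, norm_inv,
        mul_inv_cancel₀ (norm_ne_zero_iff.2 hc), one_mul] }

lemma conjIso_apply (c : ℝ) (hc : c ≠ 0) (g : E ≃ᵢ E) (x : E) :
    conjIso c hc g x = c • g (c⁻¹ • x) := rfl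

lemma conjIso_image (c : ℝ) (hc : c ≠ 0) (g : E ≃ᵢ E) (A : Set E) :
    ⇑(conjIso c hc g) '' A = c • (⇑g '' (c⁻¹ • A)) := by
  rw [← image_smul, ← image_smul, image_image, image_image]
  rfl

lemma conjIso_inj (c : ℝ) (hc : c ≠ 0) :
    Function.Injective (conjIso (n := n) c hc) := by
  intro g₁ g₂ h
  refine IsometryEquiv.ext fun y => ?_
  have h2 : conjIso (n := n) c hc g₁ (c • y) = conjIso (n := n) c hc g₂ (c • y) := by rw [h]
  simp only [conjIso_apply, inv_smul_smul₀ hc] at h2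
  exact smul_right_injective _ hc h2
lemma my_div_eq_div_mul_div (a b d : ℝ≥0∞) (hd0 : d ≠ 0) (hdt : d ≠ ⊤) :
    a / b = (a / d) * (d / b) := by
  rw [div_eq_mul_inv, div_eq_mul_inv, div_eq_mul_inv, mul_assoc, ← mul_assoc d⁻¹,
    ENNReal.inv_mul_cancel hd0 hdt, one_mul]

lemma limsup_map_eq {α γ : Type*} (f : γ → ℝ≥0∞) (m : α → γ) (l : Filter α) :
    limsup f (Filter.map m l) = limsup (fun a => f (m a)) l := by
  simp only [Filter.limsup_eq, Filter.eventually_map]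

lemma subset_one_add_smul {X Y : Set E} (hX : IsCompact X) (hXc : Convex ℝ X)
    (hB : closedBall (0 : E) 1 ⊆ X) {ρ : ℝ} (hρ0 : 0 ≤ ρ)
    (hρ : ∀ y ∈ Y, infDist y X ≤ ρ) : Y ⊆ (1 + ρ) • X := by
  have hXne : X.Nonempty := ⟨0, hB (by simp)⟩
  intro y hy
  obtain ⟨x, hxX, hx⟩ := hX.exists_infDist_eq_dist hXne y
  have hd : dist y x ≤ ρ := by rw [← hx]; exact hρ y hy
  have hmem : y - x ∈ ρ • X := by
    rcases eq_or_lt_of_le hρ0 with h0 | h0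
    · have hyx : y = x := by
        have : dist y x ≤ 0 := by rw [h0]; exact hd
        exact dist_le_zero.1 this
      rw [hyx, sub_self, ← h0, zero_smul_set hXne]
      simp
    · refine ⟨ρ⁻¹ • (y - x), hB ?_, ?_⟩
      · rw [mem_closedBall_zero_iff, norm_smul, norm_inv, Real.norm_of_nonneg hρ0,
          ← dist_eq_norm]
        calc ρ⁻¹ * dist y x ≤ ρ⁻¹ * ρ := by
              exact mul_le_mul_of_nonneg_left hd (inv_nonneg.2 hρ0)
          _ = 1 := inv_mul_cancel₀ (ne_of_gt h0)
      · show ρ • ρ⁻¹ • (y - x) = y - x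
        rw [smul_smul, mul_inv_cancel₀ (ne_of_gt h0), one_smul]
  have hadd : x + (y - x) ∈ X + ρ • X := add_mem_add hxX hmem
  rw [hXc.add_smul zero_le_one hρ0, one_smul]
  simpa using hadd

noncomputable def congrDensity (n : ℕ)
    (S : Set (EuclideanSpace ℝ (Fin n) ≃ᵢ EuclideanSpace ℝ (Fin n)))
    (K : Set (EuclideanSpace ℝ (Fin n))) : ℝ≥0∞ :=
  Filter.limsup
    (fun R : ℝ =>
      (∑' g : S, volume (((g : EuclideanSpace ℝ (Fin n) ≃ᵢ EuclideanSpace ℝ (Fin n)) '' K) ∩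
        closedBall 0 R)) / volume (closedBall (0 : EuclideanSpace ℝ (Fin n)) R))
    Filter.atTop

noncomputable def deltaC (n : ℕ) (K : Set (EuclideanSpace ℝ (Fin n))) : ℝ≥0∞ :=
  ⨆ (S : Set (EuclideanSpace ℝ (Fin n) ≃ᵢ EuclideanSpace ℝ (Fin n)))
    (_ : S.Countable ∧ S.Pairwise fun g h => interior (g '' K) ∩ interior (h '' K) = ∅),
    congrDensity n S K

/-- Let `K, K₀ ∈ 𝒦^{n*}` and let `r = d_H(K, K₀)` be their Hausdorff distance.
Then `δ^c(K) ≤ (1+r)^{2n} · δ^c(K₀)`. -/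
theorem stmt_7 (n : ℕ) (hn : 1 ≤ n) (K K₀ : Set (EuclideanSpace ℝ (Fin n)))
    (hKcomp : IsCompact K) (hKconv : Convex ℝ K) (hKint : (interior K).Nonempty)
    (hK₀comp : IsCompact K₀) (hK₀conv : Convex ℝ K₀) (hK₀int : (interior K₀).Nonempty)
    (hKl : closedBall (0 : EuclideanSpace ℝ (Fin n)) 1 ⊆ K) (hKu : K ⊆ closedBall 0 n)
    (hK₀l : closedBall (0 : EuclideanSpace ℝ (Fin n)) 1 ⊆ K₀) (hK₀u : K₀ ⊆ closedBall 0 n)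
    (r : ℝ) (hr : r = hausdorffDist K K₀) :
    deltaC n K ≤ ENNReal.ofReal ((1 + r) ^ (2 * n)) * deltaC n K₀ := by
  classical
  set c : ℝ := 1 + r with hc_def
  have hr0 : 0 ≤ r := hr ▸ hausdorffDist_nonneg
  have hc0 : 0 < c := by rw [hc_def]; linarith
  have hcne : c ≠ 0 := ne_of_gt hc0
  have hKne : K.Nonempty := ⟨0, hKl (by simp)⟩
  have hK₀ne : K₀.Nonempty := ⟨0, hK₀l (by simp)⟩
  have hfin : EMetric.hausdorffEdist K K₀ ≠ ⊤ :=
    hausdorffEdist_ne_top_of_nonempty_of_bounded hKne hK₀ne hKcomp.isBounded hK₀comp.isBounded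
  have hKsub : K ⊆ c • K₀ := by
    apply subset_one_add_smul hK₀comp hK₀conv hK₀l hr0
    intro y hy
    rw [hr]
    exact infDist_le_hausdorffDist_of_mem hy hfin
  have hK₀sub : K₀ ⊆ c • K := by
    apply subset_one_add_smul hKcomp hKconv hKl hr0
    intro y hy
    rw [hr, hausdorffDist_comm]
    exact infDist_le_hausdorffDist_of_mem hy (by rwa [EMetric.hausdorffEdist_comm])
  set L : Set (EuclideanSpace ℝ (Fin n)) := c⁻¹ • K₀ with hL_def
  have hLK : L ⊆ K := by
    rintro _ ⟨y, hy, rfl⟩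
    obtain ⟨k, hk, rfl⟩ := hK₀sub hy
    show c⁻¹ • c • k ∈ K
    rwa [inv_smul_smul₀ hcne]
  have hLcomp : IsCompact L := hK₀comp.smul c⁻¹
  have hLmeas : NullMeasurableSet L (volume : Measure (EuclideanSpace ℝ (Fin n))) :=
    hLcomp.measurableSet.nullMeasurableSet
  have hvolL : volume L = ENNReal.ofReal (c⁻¹ ^ n) * volume K₀ := by
    rw [hL_def, Measure.addHaar_smul_of_nonneg volume (inv_nonneg.2 hc0.le) K₀,
      finrank_euclideanSpace_fin]
  have hvolKle : volume K ≤ ENNReal.ofReal (c ^ n) * volume K₀ := by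
    calc volume K ≤ volume (c • K₀) := measure_mono hKsub
      _ = _ := by
        rw [Measure.addHaar_smul_of_nonneg volume hc0.le K₀, finrank_euclideanSpace_fin]
  have hcc : c ^ (2 * n) * c⁻¹ ^ n = c ^ n := by
    rw [inv_pow, two_mul, pow_add, mul_inv_cancel_right₀ (pow_ne_zero _ hcne)]
  -- termwise bound
  have hterm : ∀ (g : EuclideanSpace ℝ (Fin n) ≃ᵢ EuclideanSpace ℝ (Fin n)) (R : ℝ),
      volume (⇑g '' K ∩ closedBall 0 R) ≤
        ENNReal.ofReal (c ^ (2 * n)) * volume (⇑g '' L ∩ closedBall 0 (R + 2 * n)) := by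
    intro g R
    rcases eq_empty_or_nonempty (⇑g '' K ∩ closedBall 0 R) with he | hne
    · simp [he]
    obtain ⟨x, hxK, hxB⟩ := hne
    obtain ⟨b, hb, rfl⟩ := hxK
    have hsub : ⇑g '' L ⊆ closedBall (0 : EuclideanSpace ℝ (Fin n)) (R + 2 * n) := by
      rintro _ ⟨a, ha, rfl⟩
      have hab : dist (g a) (g b) ≤ 2 * n := by
        rw [g.isometry.dist_eq]
        have ha' : dist a (0 : EuclideanSpace ℝ (Fin n)) ≤ (n : ℝ) := mem_closedBall.1 (hKu (hLK ha))
        have hb' : dist b (0 : EuclideanSpace ℝ (Fin n)) ≤ (n : ℝ) := mem_closedBall.1 (hKu hb)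
        calc dist a b ≤ dist a 0 + dist 0 b := dist_triangle a 0 b
          _ ≤ n + n := add_le_add ha' (by rwa [dist_comm])
          _ = 2 * n := by ring
      have hxR : dist (g b) 0 ≤ R := mem_closedBall.1 hxB
      rw [mem_closedBall]
      calc dist (g a) 0 ≤ dist (g a) (g b) + dist (g b) 0 := dist_triangle _ _ _
        _ ≤ 2 * n + R := add_le_add hab hxR
        _ = R + 2 * n := by ring
    calc volume (⇑g '' K ∩ closedBall 0 R) ≤ volume (⇑g '' K) :=
          measure_mono inter_subset_left
      _ = volume K := vol_image_isom g hKcomp.measurableSet.nullMeasurableSet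
      _ ≤ ENNReal.ofReal (c ^ n) * volume K₀ := hvolKle
      _ = ENNReal.ofReal (c ^ (2 * n)) * volume L := by
          rw [hvolL, ← mul_assoc, ← ENNReal.ofReal_mul (by positivity), hcc]
      _ = ENNReal.ofReal (c ^ (2 * n)) * volume (⇑g '' L ∩ closedBall 0 (R + 2 * n)) := by
          rw [inter_eq_left.2 hsub, vol_image_isom g hLmeas]
  -- the rescaled packing
  rw [deltaC]
  refine iSup₂_le fun S hS => ?_
  set S' : Set (EuclideanSpace ℝ (Fin n) ≃ᵢ EuclideanSpace ℝ (Fin n)) :=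
    conjIso c hcne '' S with hS'_def
  have hS'cond : S'.Countable ∧
      S'.Pairwise fun g h => interior (⇑g '' K₀) ∩ interior (⇑h '' K₀) = ∅ := by
    refine ⟨hS.1.image _, ?_⟩
    rintro _ ⟨g₁, hg₁, rfl⟩ _ ⟨g₂, hg₂, rfl⟩ hne
    have hgne : g₁ ≠ g₂ := fun h => hne (by rw [h])
    have hdisj := hS.2 hg₁ hg₂ hgne
    have hint : interior (⇑g₁ '' L) ∩ interior (⇑g₂ '' L) = ∅ := by
      apply eq_empty_of_subset_empty
      calc interior (⇑g₁ '' L) ∩ interior (⇑g₂ '' L)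
          ⊆ interior (⇑g₁ '' K) ∩ interior (⇑g₂ '' K) :=
            inter_subset_inter (interior_mono (image_mono hLK))
              (interior_mono (image_mono hLK))
        _ = ∅ := hdisj
    rw [conjIso_image, conjIso_image, ← hL_def, interior_smul₀ hcne, interior_smul₀ hcne,
      ← smul_set_inter₀ hcne, hint, smul_set_empty]
  set C2 : ℝ≥0∞ := ENNReal.ofReal (c ^ (2 * n)) with hC2_def
  have hC2top : C2 ≠ ⊤ := ENNReal.ofReal_ne_top
  have hnn : (0:ℝ) ≤ (n:ℝ) := Nat.cast_nonneg n
  set SL : ℝ → ℝ≥0∞ := fun R => ∑' g : S, volume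
      ((↑g : EuclideanSpace ℝ (Fin n) ≃ᵢ EuclideanSpace ℝ (Fin n)) '' L ∩ closedBall 0 R)
    with hSL
  set HH : ℝ → ℝ≥0∞ :=
    fun R => SL R / volume (closedBall (0 : EuclideanSpace ℝ (Fin n)) R) with hHH
  set q : ℝ → ℝ≥0∞ := fun R =>
      volume (closedBall (0 : EuclideanSpace ℝ (Fin n)) (R + 2 * n)) /
        volume (closedBall (0 : EuclideanSpace ℝ (Fin n)) R) with hq
  set G : ℝ → ℝ≥0∞ := fun R =>
      (∑' h : S', volume
        ((↑h : EuclideanSpace ℝ (Fin n) ≃ᵢ EuclideanSpace ℝ (Fin n)) '' K₀ ∩ closedBall 0 R)) /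
        volume (closedBall (0 : EuclideanSpace ℝ (Fin n)) R) with hG
  have hball_ne_zero : ∀ R : ℝ, 0 < R →
      volume (closedBall (0 : EuclideanSpace ℝ (Fin n)) R) ≠ 0 := fun R hR =>
    ne_of_gt (lt_of_lt_of_le (measure_ball_pos volume 0 hR)
      (measure_mono ball_subset_closedBall))
  have hball_ne_top : ∀ R : ℝ,
      volume (closedBall (0 : EuclideanSpace ℝ (Fin n)) R) ≠ ⊤ :=
    fun R => (isCompact_closedBall _ _).measure_lt_top.ne
  -- step bound
  have hstep : ∀ᶠ R : ℝ in atTop,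
      (∑' g : S, volume
        ((↑g : EuclideanSpace ℝ (Fin n) ≃ᵢ EuclideanSpace ℝ (Fin n)) '' K ∩ closedBall 0 R)) /
          volume (closedBall (0 : EuclideanSpace ℝ (Fin n)) R)
        ≤ C2 * ((fun R : ℝ => HH (R + 2 * n)) R * q R) := by
    filter_upwards [eventually_gt_atTop 0] with R hR
    have h1 : (∑' g : S, volume
        ((↑g : EuclideanSpace ℝ (Fin n) ≃ᵢ EuclideanSpace ℝ (Fin n)) '' K ∩ closedBall 0 R))
          ≤ C2 * SL (R + 2 * n) := by
      calc (∑' g : S, volume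
          ((↑g : EuclideanSpace ℝ (Fin n) ≃ᵢ EuclideanSpace ℝ (Fin n)) '' K ∩ closedBall 0 R))
          ≤ ∑' g : S, C2 * volume
            ((↑g : EuclideanSpace ℝ (Fin n) ≃ᵢ EuclideanSpace ℝ (Fin n)) '' L ∩
              closedBall 0 (R + 2 * n)) := ENNReal.tsum_le_tsum fun g => hterm ↑g R
        _ = C2 * SL (R + 2 * n) := ENNReal.tsum_mul_left
    have hd0 : volume (closedBall (0 : EuclideanSpace ℝ (Fin n)) (R + 2 * n)) ≠ 0 :=
      hball_ne_zero _ (by linarith)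
    have hdt : volume (closedBall (0 : EuclideanSpace ℝ (Fin n)) (R + 2 * n)) ≠ ⊤ :=
      hball_ne_top _
    calc (∑' g : S, volume
        ((↑g : EuclideanSpace ℝ (Fin n) ≃ᵢ EuclideanSpace ℝ (Fin n)) '' K ∩ closedBall 0 R)) /
          volume (closedBall (0 : EuclideanSpace ℝ (Fin n)) R)
        ≤ (C2 * SL (R + 2 * n)) / volume (closedBall (0 : EuclideanSpace ℝ (Fin n)) R) :=
          ENNReal.div_le_div_right h1 _
      _ = C2 * (SL (R + 2 * n) / volume (closedBall (0 : EuclideanSpace ℝ (Fin n)) R)) :=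
          by rw [mul_div_assoc]
      _ = C2 * ((fun R : ℝ => HH (R + 2 * n)) R * q R) := by
          congr 1
          show SL (R + 2 * n) / volume (closedBall (0 : EuclideanSpace ℝ (Fin n)) R) =
            HH (R + 2 * n) * q R
          simp only [hHH, hq]
          exact my_div_eq_div_mul_div _ _ _ hd0 hdt
  -- the ratio tends to 1
  have hqlim : Tendsto q atTop (𝓝 1) := by
    have hev : ∀ᶠ R : ℝ in atTop, q R = ENNReal.ofReal ((1 + 2 * n / R) ^ n) := by
      filter_upwards [eventually_gt_atTop 0] with R hR
      rw [hq]
      show volume (closedBall (0 : EuclideanSpace ℝ (Fin n)) (R + 2 * n)) /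
        volume (closedBall (0 : EuclideanSpace ℝ (Fin n)) R) = _
      rw [Measure.addHaar_closedBall' volume _ (by linarith : (0:ℝ) ≤ R + 2 * n),
        Measure.addHaar_closedBall' volume _ hR.le, finrank_euclideanSpace_fin,
        ENNReal.mul_div_mul_right _ _ (hball_ne_zero 1 one_pos) (hball_ne_top 1),
        ← ENNReal.ofReal_div_of_pos (by positivity), ← div_pow]
      congr 2
      field_simp
    have hreal : Tendsto (fun R : ℝ => (1 + 2 * (n:ℝ) / R) ^ n) atTop (𝓝 1) := by
      have h0 : Tendsto (fun R : ℝ => 2 * (n:ℝ) / R) atTop (𝓝 0) :=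
        tendsto_const_nhds.div_atTop tendsto_id
      have h2 := ((tendsto_const_nhds (x := (1:ℝ)) (f := atTop)).add h0).pow n
      simpa using h2
    have h3 := (ENNReal.continuous_ofReal.tendsto (1:ℝ)).comp hreal
    rw [ENNReal.ofReal_one] at h3
    exact Tendsto.congr' (by filter_upwards [hev] with x hx using hx.symm) h3
  have hqls : limsup q atTop = 1 := hqlim.limsup_eq
  -- shift invariance of the limsup
  have hshift : limsup (fun R : ℝ => HH (R + 2 * n)) atTop = limsup HH atTop := by
    have hm : Filter.map (fun R : ℝ => R + 2 * (n:ℝ)) atTop = (atTop : Filter ℝ) :=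
      (OrderIso.addRight (2 * (n:ℝ))).map_atTop
    conv_rhs => rw [← hm, limsup_map_eq]
  -- relate HH with the density of the rescaled packing
  have hHG : ∀ᶠ R' : ℝ in atTop, HH R' = G (c * R') := by
    filter_upwards [eventually_ge_atTop 0] with R' hR'
    have hball : closedBall (0 : EuclideanSpace ℝ (Fin n)) (c * R') =
        c • closedBall (0 : EuclideanSpace ℝ (Fin n)) R' := by
      rw [smul_closedBall' hcne, smul_zero, Real.norm_of_nonneg hc0.le]
    have hnum : ∀ g : EuclideanSpace ℝ (Fin n) ≃ᵢ EuclideanSpace ℝ (Fin n),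
        volume (⇑(conjIso c hcne g) '' K₀ ∩ closedBall 0 (c * R')) =
          ENNReal.ofReal (c ^ n) * volume (⇑g '' L ∩ closedBall 0 R') := by
      intro g
      rw [conjIso_image, ← hL_def, hball, ← smul_set_inter₀ hcne,
        Measure.addHaar_smul_of_nonneg volume hc0.le, finrank_euclideanSpace_fin]
    have hden : volume (closedBall (0 : EuclideanSpace ℝ (Fin n)) (c * R')) =
        ENNReal.ofReal (c ^ n) * volume (closedBall (0 : EuclideanSpace ℝ (Fin n)) R') := by
      rw [hball, Measure.addHaar_smul_of_nonneg volume hc0.le, finrank_euclideanSpace_fin]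
    have hsum : (∑' h : S', volume
        ((↑h : EuclideanSpace ℝ (Fin n) ≃ᵢ EuclideanSpace ℝ (Fin n)) '' K₀ ∩
          closedBall 0 (c * R'))) = ENNReal.ofReal (c ^ n) * SL R' := by
      rw [hS'_def,
        ← (Equiv.Set.image (conjIso c hcne) S (conjIso_inj c hcne)).tsum_eq
          (fun h : ↥(conjIso c hcne '' S) => volume
            ((↑h : EuclideanSpace ℝ (Fin n) ≃ᵢ EuclideanSpace ℝ (Fin n)) '' K₀ ∩
              closedBall 0 (c * R'))),
        hSL, ← ENNReal.tsum_mul_left]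
      exact tsum_congr fun g => hnum ↑g
    show HH R' = G (c * R')
    rw [hHH, hG]
    show SL R' / volume (closedBall (0 : EuclideanSpace ℝ (Fin n)) R') =
      (∑' h : S', volume
        ((↑h : EuclideanSpace ℝ (Fin n) ≃ᵢ EuclideanSpace ℝ (Fin n)) '' K₀ ∩
          closedBall 0 (c * R'))) / volume (closedBall (0 : EuclideanSpace ℝ (Fin n)) (c * R'))
    rw [hsum, hden, ENNReal.mul_div_mul_left _ _
      (ENNReal.ofReal_pos.2 (by positivity)).ne' ENNReal.ofReal_ne_top]
  have hHlim : limsup HH atTop ≤ deltaC n K₀ := by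
    have hm : Filter.map (fun R' : ℝ => c * R') atTop = (atTop : Filter ℝ) :=
      (OrderIso.mulLeft₀ c hc0).map_atTop
    calc limsup HH atTop = limsup (fun R' : ℝ => G (c * R')) atTop := limsup_congr hHG
      _ = limsup G atTop := by conv_rhs => rw [← hm, limsup_map_eq]
      _ = congrDensity n S' K₀ := rfl
      _ ≤ deltaC n K₀ := by
          rw [deltaC]
          exact le_iSup₂ (f := fun (T : Set (EuclideanSpace ℝ (Fin n) ≃ᵢ EuclideanSpace ℝ (Fin n)))
            (_ : T.Countable ∧ T.Pairwise fun g h =>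
              interior (⇑g '' K₀) ∩ interior (⇑h '' K₀) = ∅) => congrDensity n T K₀) S' hS'cond
  calc congrDensity n S K
      ≤ limsup (fun R : ℝ => C2 * ((fun R : ℝ => HH (R + 2 * n)) R * q R)) atTop := by
        rw [congrDensity]
        exact limsup_le_limsup hstep
    _ = C2 * limsup (fun R : ℝ => (fun R : ℝ => HH (R + 2 * n)) R * q R) atTop :=
        ENNReal.limsup_const_mul_of_ne_top hC2top
    _ ≤ C2 * (limsup (fun R : ℝ => HH (R + 2 * n)) atTop * limsup q atTop) :=
        mul_le_mul_right (ENNReal.limsup_mul_le'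
          (Or.inr (by rw [hqls]; exact one_ne_top))
          (Or.inr (by rw [hqls]; exact one_ne_zero))) _
    _ = C2 * limsup HH atTop := by rw [hshift, hqls, mul_one]
    _ ≤ C2 * deltaC n K₀ := mul_le_mul_right hHlim _
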